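/- Let π be the distribution on [0,1]² × {0,1} with X₁ ∼ Uniform([0,1]), X₂ | X₁ = x₁ distributed as x₁·Uniform([0.5,1]) + (1−x₁)·Uniform([0,0.5)), and P(Y = 1 | X₂ = x₂) = 1{x₂ ≥ 0.5}. Then P(Y = 1 | X₁ = x₁) = x₁, so the predictor g(x) = x₁ satisfies ECE_π(g) = 0; nevertheless ECE_π is discontinuous at g in the L^∞ topology, since there exist predictors g_δ with ‖g_δ − g‖_∞ < δ and ECE_π(g_δ) ≥ 1/3 − 2δ. -/

import Mathlib

open MeasureTheory Filter Set Topology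

/-- The expected calibration error `ECE_π(g) = E[|E[Y | g(X)] - g(X)|]`. -/
noncomputable def ECE {α : Type*} [MeasurableSpace α] (π : Measure (α × ℝ)) (g : α → ℝ) : ℝ :=
  ∫ q, |(π[(fun r : α × ℝ => r.2) |
      MeasurableSpace.comap (fun r : α × ℝ => g r.1) Real.measurableSpace]) q - g q.1| ∂π

/-- The joint density of `(X₁, X₂)`: `X₁ ∼ Uniform([0,1])` and
`X₂ | X₁ = x₁ ∼ x₁·Uniform([1/2, 1]) + (1 − x₁)·Uniform([0, 1/2))`. -/
noncomputable def jointDens (x : ℝ × ℝ) : ℝ :=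
  if x.1 ∈ Set.Icc (0 : ℝ) 1 ∧ x.2 ∈ Set.Icc (0 : ℝ) 1 then
    (if (1/2 : ℝ) ≤ x.2 then 2 * x.1 else 2 * (1 - x.1))
  else 0

/-- The distribution `π` of `((X₁, X₂), Y)` where `(X₁, X₂)` has density `jointDens` and
`Y = 1{X₂ ≥ 1/2}` (so that `P(Y = 1 | X₂ = x₂) = 1{x₂ ≥ 1/2}`). -/
noncomputable def propDist : Measure ((ℝ × ℝ) × ℝ) :=
  (volume.withDensity fun x : ℝ × ℝ => ENNReal.ofReal (jointDens x)).map
    (fun x => (x, if (1/2 : ℝ) ≤ x.2 then (1 : ℝ) else 0))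

open scoped ENNReal NNReal

namespace S19

/-- the labelling map -/
noncomputable def T : ℝ × ℝ → (ℝ × ℝ) × ℝ :=
  fun x => (x, if (1/2 : ℝ) ≤ x.2 then (1 : ℝ) else 0)

lemma measurable_T : Measurable T :=
  measurable_id.prodMk <| Measurable.ite
    (measurableSet_le measurable_const measurable_snd) measurable_const measurable_const

lemma measurable_jointDens : Measurable jointDens := by
  unfold jointDens
  exact Measurable.ite
    ((measurableSet_Icc.preimage measurable_fst).inter (measurableSet_Icc.preimage measurable_snd))
    (Measurable.ite (measurableSet_le measurable_const measurable_snd)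
      (measurable_const.mul measurable_fst) (measurable_const.mul (measurable_const.sub measurable_fst)))
    measurable_const

lemma jointDens_nonneg (x : ℝ × ℝ) : 0 ≤ jointDens x := by
  unfold jointDens
  split_ifs with h1 h2
  · linarith [h1.1.1]
  · linarith [h1.1.2]
  · exact le_rfl

lemma jointDens_eq_zero {x : ℝ × ℝ} (hx : x ∉ Set.Icc (0:ℝ) 1 ×ˢ Set.Icc (0:ℝ) 1) :
    jointDens x = 0 := by
  unfold jointDens
  rw [if_neg]
  exact fun h => hx ⟨h.1, h.2⟩

lemma jointDens_le_two (x : ℝ × ℝ) : jointDens x ≤ 2 := by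
  unfold jointDens
  split_ifs with h1 h2
  · linarith [h1.1.2]
  · linarith [h1.1.1]
  · norm_num

/-- the base measure on `ℝ × ℝ` -/
noncomputable def ρ : Measure (ℝ × ℝ) :=
  volume.withDensity fun x : ℝ × ℝ => ENNReal.ofReal (jointDens x)

lemma propDist_eq : propDist = ρ.map T := rfl

lemma integral_rho (f : ℝ × ℝ → ℝ) :
    ∫ x, f x ∂ρ = ∫ x, jointDens x * f x := by
  have h : ρ = volume.withDensity fun x : ℝ × ℝ => ((jointDens x).toNNReal : ℝ≥0∞) := rfl
  rw [h, integral_withDensity_eq_integral_smul measurable_jointDens.real_toNNReal]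
  congr 1
  ext x
  rw [NNReal.smul_def, Real.coe_toNNReal _ (jointDens_nonneg x), smul_eq_mul]

lemma integral_propDist (f : (ℝ × ℝ) × ℝ → ℝ) (hf : AEStronglyMeasurable f propDist) :
    ∫ q, f q ∂propDist = ∫ x, jointDens x * f (T x) := by
  have hf' : AEStronglyMeasurable f (ρ.map T) := hf
  rw [propDist_eq, integral_map measurable_T.aemeasurable hf', integral_rho]

end S19

namespace S19

lemma rho_apply_eq_zero {A : Set (ℝ × ℝ)} (hA : MeasurableSet A)
    (h : ∀ x ∈ A, jointDens x = 0) : ρ A = 0 := by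
  rw [ρ, withDensity_apply _ hA]
  have : ∫⁻ x in A, ENNReal.ofReal (jointDens x) ∂volume
      = ∫⁻ x in A, 0 ∂volume := by
    refine setLIntegral_congr_fun hA (fun x hx => ?_)
    rw [h x hx, ENNReal.ofReal_zero]
  rw [this, lintegral_zero]

lemma rho_ae_mem : ∀ᵐ x ∂ρ, x ∈ Set.Icc (0:ℝ) 1 ×ˢ Set.Icc (0:ℝ) 1 := by
  have hA : MeasurableSet (Set.Icc (0:ℝ) 1 ×ˢ Set.Icc (0:ℝ) 1) :=
    measurableSet_Icc.prod measurableSet_Icc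
  rw [ae_iff]
  exact rho_apply_eq_zero hA.compl (fun x hx => jointDens_eq_zero hx)

lemma rho_univ_le : ρ Set.univ ≤ 2 := by
  rw [ρ, withDensity_apply _ MeasurableSet.univ, Measure.restrict_univ]
  have hb : ∀ x : ℝ × ℝ, ENNReal.ofReal (jointDens x)
      ≤ (Set.Icc (0:ℝ) 1 ×ˢ Set.Icc (0:ℝ) 1).indicator (fun _ => (2:ℝ≥0∞)) x := by
    intro x
    by_cases hx : x ∈ Set.Icc (0:ℝ) 1 ×ˢ Set.Icc (0:ℝ) 1
    · rw [Set.indicator_of_mem hx]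
      calc ENNReal.ofReal (jointDens x) ≤ ENNReal.ofReal 2 :=
            ENNReal.ofReal_le_ofReal (jointDens_le_two x)
        _ = 2 := by norm_num
    · rw [Set.indicator_of_notMem hx, jointDens_eq_zero hx, ENNReal.ofReal_zero]
  calc ∫⁻ x, ENNReal.ofReal (jointDens x) ∂volume
      ≤ ∫⁻ x, (Set.Icc (0:ℝ) 1 ×ˢ Set.Icc (0:ℝ) 1).indicator (fun _ => (2:ℝ≥0∞)) x ∂volume :=
        lintegral_mono hb
    _ = 2 * volume (Set.Icc (0:ℝ) 1 ×ˢ Set.Icc (0:ℝ) 1) := by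
        rw [lintegral_indicator (measurableSet_Icc.prod measurableSet_Icc)]
        simp
    _ ≤ 2 := by
        rw [Measure.volume_eq_prod, Measure.prod_prod, Real.volume_Icc]
        norm_num

instance : IsFiniteMeasure ρ :=
  ⟨lt_of_le_of_lt rho_univ_le (by norm_num)⟩

instance : IsFiniteMeasure propDist := by
  rw [propDist_eq]
  exact Measure.isFiniteMeasure_map _ _

lemma ae_propDist (p : (ℝ × ℝ) × ℝ → Prop) (hp : MeasurableSet {q | p q})
    (h : ∀ x ∈ Set.Icc (0:ℝ) 1 ×ˢ Set.Icc (0:ℝ) 1, p (T x)) : ∀ᵐ q ∂propDist, p q := by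
  rw [propDist_eq, ae_map_iff measurable_T.aemeasurable hp]
  filter_upwards [rho_ae_mem] with x hx using h x hx

/-- integrability of `jointDens * F` for `F` bounded on the unit square. -/
lemma integrable_dens_mul (F : ℝ × ℝ → ℝ) (hF : Measurable F) (C : ℝ)
    (hC : ∀ x ∈ Set.Icc (0:ℝ) 1 ×ˢ Set.Icc (0:ℝ) 1, |F x| ≤ C) :
    Integrable (fun x => jointDens x * F x) (volume : Measure (ℝ × ℝ)) := by
  have hmeas : AEStronglyMeasurable (fun x => jointDens x * F x) (volume : Measure (ℝ × ℝ)) :=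
    (measurable_jointDens.mul hF).aestronglyMeasurable
  have hCnn : 0 ≤ C := le_trans (abs_nonneg _) (hC (1/2, 1/2) (by constructor <;> constructor <;> norm_num))
  refine Integrable.mono' (g := (Set.Icc (0:ℝ) 1 ×ˢ Set.Icc (0:ℝ) 1).indicator (fun _ => 2 * C))
    ?_ hmeas (ae_of_all _ fun x => ?_)
  · exact (integrable_indicator_iff (measurableSet_Icc.prod measurableSet_Icc)).2
      (integrableOn_const (ne_of_lt (by
        rw [Measure.volume_eq_prod, Measure.prod_prod, Real.volume_Icc]; norm_num)))
  · by_cases hx : x ∈ Set.Icc (0:ℝ) 1 ×ˢ Set.Icc (0:ℝ) 1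
    · rw [Set.indicator_of_mem hx]
      rw [Real.norm_eq_abs, abs_mul, abs_of_nonneg (jointDens_nonneg x)]
      exact mul_le_mul (jointDens_le_two x) (hC x hx) (abs_nonneg _) (by norm_num)
    · rw [Set.indicator_of_notMem hx, jointDens_eq_zero hx]
      simp

end S19

namespace S19

lemma inner_eval (a b : ℝ) :
    ∫ x₂ in Set.Icc (0:ℝ) 1, (if (1/2:ℝ) ≤ x₂ then a else b) = (a + b) / 2 := by
  have hsplit : Set.Icc (0:ℝ) 1 = Set.Ico (0:ℝ) (1/2) ∪ Set.Icc (1/2:ℝ) 1 := by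
    ext t
    simp only [Set.mem_Icc, Set.mem_Ico, Set.mem_union]
    constructor
    · rintro ⟨h0, h1⟩
      rcases lt_or_ge t (1/2) with h | h
      · exact Or.inl ⟨h0, h⟩
      · exact Or.inr ⟨h, h1⟩
    · rintro (⟨h0, h1⟩ | ⟨h0, h1⟩) <;> constructor <;> linarith
  have hdisj : Disjoint (Set.Ico (0:ℝ) (1/2)) (Set.Icc (1/2:ℝ) 1) := by
    rw [Set.disjoint_left]
    rintro t ⟨_, h1⟩ ⟨h2, _⟩
    linarith
  have hm : Measurable fun x₂ : ℝ => if (1/2:ℝ) ≤ x₂ then a else b :=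
    Measurable.ite (measurableSet_le measurable_const measurable_id)
      measurable_const measurable_const
  have hint : ∀ S : Set ℝ, volume S < ⊤ →
      IntegrableOn (fun x₂ : ℝ => if (1/2:ℝ) ≤ x₂ then a else b) S volume := by
    intro S hS
    refine Integrable.mono' (g := fun _ => |a| + |b|) (integrableOn_const (ne_of_lt hS))
      hm.aestronglyMeasurable.restrict (ae_of_all _ fun x => ?_)
    rw [Real.norm_eq_abs]
    split_ifs
    · linarith [abs_nonneg b, le_abs_self a, neg_abs_le a]
    · linarith [abs_nonneg a, le_abs_self b, neg_abs_le b]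
  rw [hsplit, setIntegral_union hdisj measurableSet_Icc
      (hint _ (by rw [Real.volume_Ico]; norm_num))
      (hint _ (by rw [Real.volume_Icc]; norm_num))]
  have h1 : ∫ x₂ in Set.Ico (0:ℝ) (1/2), (if (1/2:ℝ) ≤ x₂ then a else b) ∂volume
      = b / 2 := by
    rw [setIntegral_congr_fun measurableSet_Ico
      (g := fun _ => b) (fun x hx => by rw [if_neg (not_le.2 hx.2)])]
    rw [setIntegral_const, Real.volume_real_Ico, smul_eq_mul]
    rw [max_eq_left (by norm_num)]
    ring
  have h2 : ∫ x₂ in Set.Icc (1/2:ℝ) 1, (if (1/2:ℝ) ≤ x₂ then a else b) ∂volume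
      = a / 2 := by
    rw [setIntegral_congr_fun measurableSet_Icc
      (g := fun _ => a) (fun x hx => by rw [if_pos hx.1])]
    rw [setIntegral_const, Real.volume_real_Icc, smul_eq_mul]
    rw [max_eq_left (by norm_num)]
    ring
  rw [h1, h2]
  ring

end S19

namespace S19

/-- Fubini engine for `∫ jointDens * F`. -/
lemma integral_dens_mul_eq (F : ℝ × ℝ → ℝ) (hF : Measurable F) (C : ℝ)
    (hC : ∀ x ∈ Set.Icc (0:ℝ) 1 ×ˢ Set.Icc (0:ℝ) 1, |F x| ≤ C) :
    ∫ x, jointDens x * F x =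
      ∫ x₁ in Set.Icc (0:ℝ) 1, ∫ x₂ in Set.Icc (0:ℝ) 1,
        jointDens (x₁, x₂) * F (x₁, x₂) := by
  have hInt : Integrable (fun x => jointDens x * F x) (volume : Measure (ℝ × ℝ)) :=
    integrable_dens_mul F hF C hC
  have hzero : ∀ x ∉ Set.Icc (0:ℝ) 1 ×ˢ Set.Icc (0:ℝ) 1, jointDens x * F x = 0 := by
    intro x hx
    rw [jointDens_eq_zero hx, zero_mul]
  rw [← setIntegral_eq_integral_of_forall_compl_eq_zero hzero]
  have hres : (volume : Measure (ℝ × ℝ)).restrict (Set.Icc (0:ℝ) 1 ×ˢ Set.Icc (0:ℝ) 1)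
      = ((volume : Measure ℝ).restrict (Set.Icc (0:ℝ) 1)).prod
        ((volume : Measure ℝ).restrict (Set.Icc (0:ℝ) 1)) := by
    rw [Measure.volume_eq_prod, Measure.prod_restrict]
  rw [hres, integral_prod _ (by
    rw [← hres]
    exact hInt.integrableOn)]

end S19

namespace S19

lemma compA (B : Set ℝ) (hB : MeasurableSet B) :
    ∫ x : ℝ × ℝ, jointDens x * (B.indicator (fun _ => (1:ℝ)) x.1 *
      ((if (1/2:ℝ) ≤ x.2 then (1:ℝ) else 0) - x.1)) = 0 := by
  set F : ℝ × ℝ → ℝ := fun x => B.indicator (fun _ => (1:ℝ)) x.1 *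
      ((if (1/2:ℝ) ≤ x.2 then (1:ℝ) else 0) - x.1) with hFdef
  have hF : Measurable F :=
    ((measurable_const.indicator hB).comp measurable_fst).mul
      ((Measurable.ite (measurableSet_le measurable_const measurable_snd)
        measurable_const measurable_const).sub measurable_fst)
  have hC : ∀ x ∈ Set.Icc (0:ℝ) 1 ×ˢ Set.Icc (0:ℝ) 1, |F x| ≤ 2 := by
    rintro x ⟨hx1, _⟩
    have h1 : |B.indicator (fun _ => (1:ℝ)) x.1| ≤ 1 := by
      by_cases h : x.1 ∈ B <;> simp [h]
    have h2 : |(if (1/2:ℝ) ≤ x.2 then (1:ℝ) else 0) - x.1| ≤ 2 := by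
      rw [abs_le]
      split_ifs <;> constructor <;> linarith [hx1.1, hx1.2]
    calc |F x| = |B.indicator (fun _ => (1:ℝ)) x.1| *
          |(if (1/2:ℝ) ≤ x.2 then (1:ℝ) else 0) - x.1| := abs_mul _ _
      _ ≤ 1 * 2 := mul_le_mul h1 h2 (abs_nonneg _) zero_le_one
      _ = 2 := by norm_num
  rw [integral_dens_mul_eq F hF 2 hC]
  rw [setIntegral_congr_fun measurableSet_Icc (g := fun _ => (0:ℝ)) ?_]
  · simp
  intro x₁ hx₁
  dsimp only
  have hinner : ∫ x₂ in Set.Icc (0:ℝ) 1, jointDens (x₁, x₂) * F (x₁, x₂)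
      = ∫ x₂ in Set.Icc (0:ℝ) 1, (if (1/2:ℝ) ≤ x₂ then
          (2 * x₁) * (B.indicator (fun _ => (1:ℝ)) x₁ * (1 - x₁))
        else (2 * (1 - x₁)) * (B.indicator (fun _ => (1:ℝ)) x₁ * (0 - x₁))) := by
    refine setIntegral_congr_fun measurableSet_Icc (fun x₂ hx₂ => ?_)
    simp only [hFdef, jointDens, if_pos (show x₁ ∈ Set.Icc (0:ℝ) 1 ∧ x₂ ∈ Set.Icc (0:ℝ) 1
      from ⟨hx₁, hx₂⟩)]
    split_ifs <;> ring
  rw [hinner, inner_eval]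
  ring

lemma compB (δ : ℝ) :
    ∫ x : ℝ × ℝ, jointDens x * (|(if (1/2:ℝ) ≤ x.2 then (1:ℝ) else 0) - x.1| - δ)
      = 1/3 - δ := by
  set F : ℝ × ℝ → ℝ := fun x => |(if (1/2:ℝ) ≤ x.2 then (1:ℝ) else 0) - x.1| - δ with hFdef
  have hF : Measurable F :=
    (((Measurable.ite (measurableSet_le measurable_const measurable_snd)
        measurable_const measurable_const).sub measurable_fst).abs).sub measurable_const
  have hC : ∀ x ∈ Set.Icc (0:ℝ) 1 ×ˢ Set.Icc (0:ℝ) 1, |F x| ≤ 2 + |δ| := by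
    rintro x ⟨hx1, _⟩
    have h2 : |(if (1/2:ℝ) ≤ x.2 then (1:ℝ) else 0) - x.1| ≤ 2 := by
      rw [abs_le]
      split_ifs <;> constructor <;> linarith [hx1.1, hx1.2]
    rw [hFdef, abs_le]
    constructor <;>
      linarith [le_abs_self δ, neg_abs_le δ,
        abs_nonneg ((if (1/2:ℝ) ≤ x.2 then (1:ℝ) else 0) - x.1)]
  rw [integral_dens_mul_eq F hF (2 + |δ|) hC]
  have houter : ∫ x₁ in Set.Icc (0:ℝ) 1, (∫ x₂ in Set.Icc (0:ℝ) 1,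
        jointDens (x₁, x₂) * F (x₁, x₂))
      = ∫ x₁ in Set.Icc (0:ℝ) 1, (2 * x₁ - 2 * x₁ ^ 2 - δ) := by
    refine setIntegral_congr_fun measurableSet_Icc (fun x₁ hx₁ => ?_)
    have hinner : ∫ x₂ in Set.Icc (0:ℝ) 1, jointDens (x₁, x₂) * F (x₁, x₂)
        = ∫ x₂ in Set.Icc (0:ℝ) 1, (if (1/2:ℝ) ≤ x₂ then
            (2 * x₁) * ((1 - x₁) - δ) else (2 * (1 - x₁)) * (x₁ - δ)) := by
      refine setIntegral_congr_fun measurableSet_Icc (fun x₂ hx₂ => ?_)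
      simp only [hFdef, jointDens, if_pos (show x₁ ∈ Set.Icc (0:ℝ) 1 ∧ x₂ ∈ Set.Icc (0:ℝ) 1
        from ⟨hx₁, hx₂⟩)]
      split_ifs
      · rw [abs_of_nonneg (by linarith [hx₁.2] : (0:ℝ) ≤ 1 - x₁)]
        try ring
      · rw [abs_of_nonpos (by linarith [hx₁.1] : (0:ℝ) - x₁ ≤ 0)]
        try ring
    rw [hinner, inner_eval]
    ring
  rw [houter, integral_Icc_eq_integral_Ioc,
    ← intervalIntegral.integral_of_le (zero_le_one)]
  have hi1 : IntervalIntegrable (fun x : ℝ => 2 * x) volume 0 1 :=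
    (intervalIntegral.intervalIntegrable_id).const_mul 2
  have hi2 : IntervalIntegrable (fun x : ℝ => 2 * x ^ 2) volume 0 1 :=
    (intervalIntegral.intervalIntegrable_pow 2).const_mul 2
  rw [intervalIntegral.integral_sub (hi1.sub hi2) intervalIntegrable_const,
    intervalIntegral.integral_sub hi1 hi2,
    intervalIntegral.integral_const_mul, intervalIntegral.integral_const_mul,
    integral_id, integral_pow, intervalIntegral.integral_const]
  norm_num

end S19

namespace S19

lemma meas_p11 : Measurable (fun q : (ℝ × ℝ) × ℝ => q.1.1) :=
  measurable_fst.comp measurable_fst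

lemma hm1 : MeasurableSpace.comap (fun q : (ℝ × ℝ) × ℝ => q.1.1) Real.measurableSpace
    ≤ (inferInstance : MeasurableSpace ((ℝ × ℝ) × ℝ)) :=
  meas_p11.comap_le

lemma integrable_snd_pd : Integrable (fun q : (ℝ × ℝ) × ℝ => q.2) propDist := by
  refine Integrable.mono' (integrable_const 1) measurable_snd.aestronglyMeasurable ?_
  refine ae_propDist (fun q => ‖q.2‖ ≤ 1) (measurableSet_le measurable_snd.norm measurable_const)
    (fun x _ => ?_)
  simp only [T]
  split_ifs <;> simp

lemma integrable_p11_pd : Integrable (fun q : (ℝ × ℝ) × ℝ => q.1.1) propDist := by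
  refine Integrable.mono' (integrable_const 1) meas_p11.aestronglyMeasurable ?_
  refine ae_propDist (fun q => ‖q.1.1‖ ≤ 1) (measurableSet_le meas_p11.norm measurable_const)
    (fun x hx => ?_)
  simp only [T, Real.norm_eq_abs]
  rw [abs_le]
  exact ⟨by linarith [hx.1.1], hx.1.2⟩

lemma setIntegral_eq (B : Set ℝ) (hB : MeasurableSet B) (f : (ℝ × ℝ) × ℝ → ℝ)
    (hf : Measurable f) :
    ∫ q in (fun q : (ℝ × ℝ) × ℝ => q.1.1) ⁻¹' B, f q ∂propDist
      = ∫ x, jointDens x * (B.indicator (fun _ => (1:ℝ)) x.1 * f (T x)) := by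
  have hpre : MeasurableSet ((fun q : (ℝ × ℝ) × ℝ => q.1.1) ⁻¹' B) := hB.preimage meas_p11
  rw [← integral_indicator hpre]
  have hind : (Set.indicator ((fun q : (ℝ × ℝ) × ℝ => q.1.1) ⁻¹' B) f)
      = fun q => B.indicator (fun _ => (1:ℝ)) q.1.1 * f q := by
    funext q
    by_cases h : q.1.1 ∈ B
    · rw [Set.indicator_of_mem (show q ∈ (fun q : (ℝ × ℝ) × ℝ => q.1.1) ⁻¹' B from h) f,
        Set.indicator_of_mem h, one_mul]
    · rw [Set.indicator_of_notMem (show q ∉ (fun q : (ℝ × ℝ) × ℝ => q.1.1) ⁻¹' B from h) f,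
        Set.indicator_of_notMem h, zero_mul]
  rw [hind]
  exact integral_propDist _
    (((measurable_const.indicator hB).comp meas_p11).mul hf).aestronglyMeasurable

theorem part1 :
    (propDist[(fun q : (ℝ × ℝ) × ℝ => q.2) |
        MeasurableSpace.comap (fun q : (ℝ × ℝ) × ℝ => q.1.1) Real.measurableSpace])
      =ᵐ[propDist] fun q => q.1.1 := by
  haveI : IsFiniteMeasure (propDist.trim hm1) := isFiniteMeasure_trim hm1
  refine (ae_eq_condExp_of_forall_setIntegral_eq hm1 integrable_snd_pd
    (fun s _ _ => integrable_p11_pd.integrableOn) (fun s hs _ => ?_) ?_).symm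
  · obtain ⟨B, hB, rfl⟩ := hs
    rw [setIntegral_eq B hB _ meas_p11, setIntegral_eq B hB _ measurable_snd]
    simp only [T]
    rw [← sub_eq_zero, ← integral_sub
      (integrable_dens_mul (fun x : ℝ × ℝ => B.indicator (fun _ => (1:ℝ)) x.1 * x.1)
        (((measurable_const.indicator hB).comp measurable_fst).mul
          measurable_fst) 1 ?_)
      (integrable_dens_mul (fun x : ℝ × ℝ => B.indicator (fun _ => (1:ℝ)) x.1 *
          (if (1/2:ℝ) ≤ x.2 then (1:ℝ) else 0))
        (((measurable_const.indicator hB).comp measurable_fst).mul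
          (Measurable.ite (measurableSet_le measurable_const measurable_snd)
            measurable_const measurable_const)) 1 ?_)]
    · rw [show (fun x : ℝ × ℝ => jointDens x * (B.indicator (fun _ => (1:ℝ)) x.1 * x.1)
            - jointDens x * (B.indicator (fun _ => (1:ℝ)) x.1 *
              (if (1/2:ℝ) ≤ x.2 then (1:ℝ) else 0)))
          = fun x : ℝ × ℝ => -(jointDens x * (B.indicator (fun _ => (1:ℝ)) x.1 *
              ((if (1/2:ℝ) ≤ x.2 then (1:ℝ) else 0) - x.1))) from funext fun x => by ring]
      rw [integral_neg, compA B hB, neg_zero]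
    · rintro x ⟨hx1, _⟩
      rw [abs_mul]
      have h1 : |B.indicator (fun _ => (1:ℝ)) x.1| ≤ 1 := by
        by_cases h : x.1 ∈ B <;> simp [h]
      have h2 : |x.1| ≤ 1 := abs_le.2 ⟨by linarith [hx1.1], hx1.2⟩
      calc |B.indicator (fun _ => (1:ℝ)) x.1| * |x.1| ≤ 1 * 1 :=
        mul_le_mul h1 h2 (abs_nonneg _) zero_le_one
        _ = 1 := one_mul 1
    · rintro x ⟨hx1, _⟩
      rw [abs_mul]
      have h1 : |B.indicator (fun _ => (1:ℝ)) x.1| ≤ 1 := by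
        by_cases h : x.1 ∈ B <;> simp [h]
      have h2 : |if (1/2:ℝ) ≤ x.2 then (1:ℝ) else 0| ≤ 1 := by
        split_ifs <;> simp
      calc |B.indicator (fun _ => (1:ℝ)) x.1| * |if (1/2:ℝ) ≤ x.2 then (1:ℝ) else 0| ≤ 1 * 1 :=
        mul_le_mul h1 h2 (abs_nonneg _) zero_le_one
        _ = 1 := one_mul 1
  · exact StronglyMeasurable.aestronglyMeasurable
      ((show @Measurable _ _ (MeasurableSpace.comap (fun q : (ℝ × ℝ) × ℝ => q.1.1)
          Real.measurableSpace) _ (fun q : (ℝ × ℝ) × ℝ => q.1.1)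
        from fun s hs => ⟨s, hs, rfl⟩).stronglyMeasurable)

end S19

namespace S19

theorem part2 : ECE propDist (fun x : ℝ × ℝ => x.1) = 0 := by
  simp only [ECE]
  rw [integral_congr_ae (g := fun _ => (0:ℝ)) ?_, integral_zero]
  filter_upwards [part1] with q hq
  rw [hq, sub_self, abs_zero]

noncomputable def G0 (δ : ℝ) : ℝ → ℝ := fun z => ((⌊z/δ⌋ : ℝ) + 1 - δ/4) * δ
noncomputable def G1 (δ : ℝ) : ℝ → ℝ := fun z => ((⌊z/δ⌋ : ℝ) + δ/4) * δ
noncomputable def Gd (δ : ℝ) : ℝ × ℝ → ℝ :=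
  fun x => if (1/2:ℝ) ≤ x.2 then G1 δ x.1 else G0 δ x.1
noncomputable def Phid (δ : ℝ) : ℝ → ℝ :=
  fun v => if Int.fract (v/δ) = δ/4 then 1 else 0

lemma measurable_G0 (δ : ℝ) : Measurable (G0 δ) :=
  (((measurable_from_top.comp (measurable_id.div_const δ).floor).add_const 1).sub_const
    (δ/4)).mul_const δ

lemma measurable_G1 (δ : ℝ) : Measurable (G1 δ) :=
  ((measurable_from_top.comp (measurable_id.div_const δ).floor).add_const (δ/4)).mul_const δ

lemma measurable_Gd (δ : ℝ) : Measurable (Gd δ) :=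
  Measurable.ite (measurableSet_le measurable_const measurable_snd)
    ((measurable_G1 δ).comp measurable_fst) ((measurable_G0 δ).comp measurable_fst)

lemma measurable_Phid (δ : ℝ) : Measurable (Phid δ) :=
  Measurable.ite
    (measurableSet_eq_fun (measurable_fract.comp (measurable_id.div_const δ)) measurable_const)
    measurable_const measurable_const

lemma Gd_close {δ : ℝ} (hδ : 0 < δ) (hs : δ < 1/6) (x : ℝ × ℝ) : |Gd δ x - x.1| < δ := by
  have hδ0 : δ ≠ 0 := ne_of_gt hδ
  have hfr0 := Int.fract_nonneg (x.1/δ)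
  have hfr1 := Int.fract_lt_one (x.1/δ)
  have hz : (↑⌊x.1/δ⌋ : ℝ) = x.1/δ - Int.fract (x.1/δ) := by
    rw [Int.self_sub_fract]
  have hdm : x.1/δ * δ = x.1 := div_mul_cancel₀ x.1 hδ0
  have huδ : Int.fract (x.1/δ) * δ < δ := by
    nlinarith
  have huδ0 : 0 ≤ Int.fract (x.1/δ) * δ := mul_nonneg hfr0 hδ.le
  rw [Gd]
  split_ifs
  · have h1 : G1 δ x.1 - x.1 = δ*δ/4 - Int.fract (x.1/δ) * δ := by
      rw [G1, hz]
      field_simp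
      ring
    rw [h1, abs_lt]
    constructor <;> nlinarith
  · have h0 : G0 δ x.1 - x.1 = δ - δ*δ/4 - Int.fract (x.1/δ) * δ := by
      rw [G0, hz]
      field_simp
      ring
    rw [h0, abs_lt]
    constructor <;> nlinarith

end S19

namespace S19

lemma Phid_G1 {δ : ℝ} (hδ : 0 < δ) (hs : δ < 1/6) (z : ℝ) : Phid δ (G1 δ z) = 1 := by
  have hδ0 : δ ≠ 0 := ne_of_gt hδ
  rw [Phid, G1, if_pos]
  rw [mul_div_cancel_right₀ _ hδ0, Int.fract_intCast_add]
  exact Int.fract_eq_self.2 ⟨by linarith, by linarith⟩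

lemma Phid_G0 {δ : ℝ} (hδ : 0 < δ) (hs : δ < 1/6) (z : ℝ) : Phid δ (G0 δ z) = 0 := by
  have hδ0 : δ ≠ 0 := ne_of_gt hδ
  rw [Phid, G0, if_neg]
  rw [mul_div_cancel_right₀ _ hδ0]
  have h : (↑⌊z/δ⌋ : ℝ) + 1 - δ/4 = ↑⌊z/δ⌋ + (1 - δ/4) := by ring
  rw [h, Int.fract_intCast_add, Int.fract_eq_self.2 ⟨by linarith, by linarith⟩]
  intro hcon
  linarith

lemma Y_eq_Phid_Gd {δ : ℝ} (hδ : 0 < δ) (hs : δ < 1/6) :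
    (fun q : (ℝ × ℝ) × ℝ => q.2) =ᵐ[propDist] fun q => Phid δ (Gd δ q.1) := by
  refine ae_propDist (fun q => q.2 = Phid δ (Gd δ q.1))
    (measurableSet_eq_fun measurable_snd
      ((measurable_Phid δ).comp ((measurable_Gd δ).comp measurable_fst)))
    (fun x _ => ?_)
  simp only [T, Gd]
  split_ifs with h
  · exact (Phid_G1 hδ hs x.1).symm.trans (congrArg (Phid δ) (if_pos h).symm)
  · exact (Phid_G0 hδ hs x.1).symm.trans (congrArg (Phid δ) (if_neg h).symm)

lemma part3small {δ : ℝ} (hδ : 0 < δ) (hs : δ < 1/6) :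
    1/3 - δ ≤ ECE propDist (Gd δ) := by
  have hgdm : Measurable (fun r : (ℝ × ℝ) × ℝ => Gd δ r.1) :=
    (measurable_Gd δ).comp measurable_fst
  have hm' : MeasurableSpace.comap (fun r : (ℝ × ℝ) × ℝ => Gd δ r.1) Real.measurableSpace
      ≤ (Prod.instMeasurableSpace : MeasurableSpace ((ℝ × ℝ) × ℝ)) :=
    hgdm.comap_le
  haveI : IsFiniteMeasure (propDist.trim hm') := isFiniteMeasure_trim hm'
  have hae := Y_eq_Phid_Gd hδ hs
  have hint : Integrable (fun q : (ℝ × ℝ) × ℝ => Phid δ (Gd δ q.1)) propDist :=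
    integrable_snd_pd.congr hae
  have hsm : AEStronglyMeasurable[
      (MeasurableSpace.comap (fun r : (ℝ × ℝ) × ℝ => Gd δ r.1) Real.measurableSpace)]
      (fun q : (ℝ × ℝ) × ℝ => Phid δ (Gd δ q.1)) propDist := by
    refine StronglyMeasurable.aestronglyMeasurable (Measurable.stronglyMeasurable ?_)
    exact (measurable_Phid δ).comp
      (show @Measurable _ _ (MeasurableSpace.comap (fun r : (ℝ × ℝ) × ℝ => Gd δ r.1)
          Real.measurableSpace) _ (fun q : (ℝ × ℝ) × ℝ => Gd δ q.1)
        from fun s hs => ⟨s, hs, rfl⟩)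
  have hcond : (propDist[(fun q : (ℝ × ℝ) × ℝ => q.2) |
      MeasurableSpace.comap (fun r : (ℝ × ℝ) × ℝ => Gd δ r.1) Real.measurableSpace])
      =ᵐ[propDist] fun q : (ℝ × ℝ) × ℝ => q.2 :=
    (condExp_congr_ae hae).trans
      ((condExp_of_aestronglyMeasurable' hm' hsm hint).trans hae.symm)
  have hECE : ECE propDist (Gd δ) = ∫ q, |q.2 - Gd δ q.1| ∂propDist := by
    simp only [ECE]
    refine integral_congr_ae ?_
    filter_upwards [hcond] with q hq
    rw [hq]
  rw [hECE, integral_propDist (fun q : (ℝ × ℝ) × ℝ => |q.2 - Gd δ q.1|)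
    (show AEStronglyMeasurable (fun q : (ℝ × ℝ) × ℝ => |q.2 - Gd δ q.1|) propDist from
      ((measurable_snd.sub hgdm).abs).aestronglyMeasurable)]
  have hstep : ∫ x : ℝ × ℝ, jointDens x * |(T x).2 - Gd δ x|
      ≥ ∫ x : ℝ × ℝ, jointDens x * (|(if (1/2:ℝ) ≤ x.2 then (1:ℝ) else 0) - x.1| - δ) := by
    refine integral_mono
      (integrable_dens_mul _ (((Measurable.ite (measurableSet_le measurable_const
          measurable_snd) measurable_const measurable_const).sub measurable_fst).abs.sub
          measurable_const) (2 + |δ|) ?_)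
      (integrable_dens_mul (fun x => |(T x).2 - Gd δ x|)
        (((Measurable.ite (measurableSet_le measurable_const measurable_snd) measurable_const
          measurable_const).sub (measurable_Gd δ)).abs) 3 ?_)
      (fun x => ?_)
    · rintro x ⟨hx1, _⟩
      have h2 : |(if (1/2:ℝ) ≤ x.2 then (1:ℝ) else 0) - x.1| ≤ 2 := by
        rw [abs_le]
        split_ifs <;> constructor <;> linarith [hx1.1, hx1.2]
      rw [abs_le]
      constructor <;>
        linarith [le_abs_self δ, neg_abs_le δ,
          abs_nonneg ((if (1/2:ℝ) ≤ x.2 then (1:ℝ) else 0) - x.1)]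
    · rintro x ⟨hx1, _⟩
      have h2 : |(if (1/2:ℝ) ≤ x.2 then (1:ℝ) else 0) - x.1| ≤ 2 := by
        rw [abs_le]
        split_ifs <;> constructor <;> linarith [hx1.1, hx1.2]
      have h3 : |Gd δ x - x.1| < δ := Gd_close hδ hs x
      have h4 : |(T x).2 - Gd δ x| ≤ |(if (1/2:ℝ) ≤ x.2 then (1:ℝ) else 0) - x.1|
          + |Gd δ x - x.1| := by
        simp only [T]
        calc |(if (1/2:ℝ) ≤ x.2 then (1:ℝ) else 0) - Gd δ x|
            ≤ |(if (1/2:ℝ) ≤ x.2 then (1:ℝ) else 0) - x.1| + |x.1 - Gd δ x| := abs_sub_le _ _ _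
          _ = |(if (1/2:ℝ) ≤ x.2 then (1:ℝ) else 0) - x.1| + |Gd δ x - x.1| := by
              rw [abs_sub_comm x.1 (Gd δ x)]
      rw [abs_abs]
      linarith
    · refine mul_le_mul_of_nonneg_left ?_ (jointDens_nonneg x)
      have h3 : |Gd δ x - x.1| < δ := Gd_close hδ hs x
      have h4 : |(if (1/2:ℝ) ≤ x.2 then (1:ℝ) else 0) - x.1|
          ≤ |(T x).2 - Gd δ x| + |Gd δ x - x.1| := by
        simp only [T]
        exact abs_sub_le _ _ _
      linarith
  calc 1/3 - δ = ∫ x : ℝ × ℝ, jointDens x *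
        (|(if (1/2:ℝ) ≤ x.2 then (1:ℝ) else 0) - x.1| - δ) := (compB δ).symm
    _ ≤ _ := hstep

end S19

/-- For the distribution above: `P(Y = 1 | X₁ = x₁) = x₁`, so the
predictor `g(x) = x₁` satisfies `ECE_π(g) = 0`; nevertheless `ECE_π` is discontinuous at
`g` in the `L^∞` topology: for every `δ > 0` there is a predictor `g_δ` with
`‖g_δ − g‖_∞ < δ` and `ECE_π(g_δ) ≥ 1/3 − 2δ`. -/
theorem stmt19 :
    ((propDist[(fun q : (ℝ × ℝ) × ℝ => q.2) |
        MeasurableSpace.comap (fun q : (ℝ × ℝ) × ℝ => q.1.1) Real.measurableSpace])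
      =ᵐ[propDist] fun q => q.1.1) ∧
    ECE propDist (fun x => x.1) = 0 ∧
    ∀ δ : ℝ, 0 < δ → ∃ gδ : ℝ × ℝ → ℝ, Measurable gδ ∧
      (∀ x : ℝ × ℝ, |gδ x - x.1| < δ) ∧ 1/3 - 2*δ ≤ ECE propDist gδ := by
  refine ⟨S19.part1, S19.part2, fun δ hδ => ?_⟩
  by_cases hs : δ < 1/6
  · exact ⟨S19.Gd δ, S19.measurable_Gd δ, S19.Gd_close hδ hs,
      le_trans (by linarith) (S19.part3small hδ hs)⟩
  · refine ⟨fun x => x.1, measurable_fst, fun x => by simpa using hδ, ?_⟩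
    rw [S19.part2]
    linarith [not_lt.1 hs]
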